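/- Let ĥ, v ∈ ℂⁿ and η ≥ 0. Then (max{0, |ĥᴴv| − η‖v‖})² is the least element of the set { |(ĥ+e)ᴴv|² : e ∈ ℂⁿ, ‖e‖ ≤ η }; that is, the worst-case minimization min_{‖e‖≤η} |(ĥ+e)ᴴv|² has optimal value (max{0, |ĥᴴv| − η‖v‖})², and this value is attained. -/

import Mathlib

open Matrix

noncomputable def toE {n : ℕ} (x : Fin n → ℂ) : EuclideanSpace ℂ (Fin n) :=
  (WithLp.equiv 2 (Fin n → ℂ)).symm x

lemma dot_eq_inner' {n : ℕ} (x y : Fin n → ℂ) :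
    star x ⬝ᵥ y = (inner ℂ (toE x) (toE y) : ℂ) := by
  simp [toE, dotProduct, PiLp.inner_apply, RCLike.inner_apply]
  exact Finset.sum_congr rfl fun _ _ => mul_comm _ _

lemma norm_eq' {n : ℕ} (x : Fin n → ℂ) :
    Real.sqrt (∑ i, ‖x i‖ ^ 2) = ‖toE x‖ := by
  rw [EuclideanSpace.norm_eq]; simp [toE]

lemma toE_add {n : ℕ} (x y : Fin n → ℂ) : toE (x + y) = toE x + toE y := rfl
lemma toE_smul {n : ℕ} (c : ℂ) (x : Fin n → ℂ) : toE (c • x) = c • toE x := rfl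

theorem worst_case_min
    (n : ℕ) (hhat v : Fin n → ℂ) (η : ℝ) (hη : 0 ≤ η) :
    IsLeast
      { y : ℝ | ∃ e : Fin n → ℂ, Real.sqrt (∑ i, ‖e i‖ ^ 2) ≤ η ∧
          y = ‖star (hhat + e) ⬝ᵥ v‖ ^ 2 }
      ((max 0 (‖star hhat ⬝ᵥ v‖ - η * Real.sqrt (∑ i, ‖v i‖ ^ 2))) ^ 2) := by
  set a : ℂ := inner ℂ (toE hhat) (toE v) with ha
  set A : ℝ := ‖a‖ with hA
  set s : ℝ := ‖toE v‖ with hs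
  have hrw : ∀ e : Fin n → ℂ, (star (hhat + e) ⬝ᵥ v : ℂ) = a + inner ℂ (toE e) (toE v) := by
    intro e
    rw [dot_eq_inner', toE_add, inner_add_left]
  have hvv : (inner ℂ (toE v) (toE v) : ℂ) = ((s:ℂ))^2 := by
    rw [inner_self_eq_norm_sq_to_K]; norm_num; rfl
  constructor
  · -- membership
    show ∃ e : Fin n → ℂ, _ ∧ _
    rw [dot_eq_inner', norm_eq', ← ha, ← hA, ← hs]
    rcases eq_or_lt_of_le (norm_nonneg (toE v)) with hs0 | hs0
    · have hv : toE v = 0 := by rw [← norm_eq_zero, ← hs0]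
      have hA0 : A = 0 := by rw [hA, ha, hv, inner_zero_right, norm_zero]
      refine ⟨0, by simp [hη], ?_⟩
      have hss : s = 0 := hs0.symm
      rw [hrw, hA0, hss]
      simp [ha, hv]
    · have hs0' : (0:ℝ) < s := hs0
      rcases le_or_gt A (η * s) with hc | hc
      · -- can cancel completely
        refine ⟨(-(starRingEnd ℂ) a / ((s:ℂ)^2)) • v, ?_, ?_⟩
        · rw [norm_eq', toE_smul, norm_smul, ← hs]
          have h1 : ‖-(starRingEnd ℂ) a / ((s:ℂ)^2)‖ = A / s^2 := by
            rw [norm_div, norm_neg]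
            simp [hA]
          rw [h1, div_mul_eq_mul_div, div_le_iff₀ (by positivity)]
          nlinarith
        · have h1 : max 0 (A - η * s) = 0 := by
            rw [max_eq_left]; linarith
          rw [hrw, h1, toE_smul, inner_smul_left, hvv]
          have h2 : ((starRingEnd ℂ)) (-(starRingEnd ℂ) a / ((s:ℂ)^2)) = -a / ((s:ℂ)^2) := by
            simp [map_div₀]
          rw [h2]
          have hs2 : ((s:ℂ))^2 ≠ 0 :=
            pow_ne_zero 2 (by exact_mod_cast ne_of_gt hs0')
          field_simp
          rw [div_self (by exact_mod_cast ne_of_gt hs0')]; simp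
      · -- shrink as much as possible
        have hApos : 0 < A := lt_of_le_of_lt (by positivity) hc
        refine ⟨(((-(η/(s*A)) : ℝ) : ℂ) * (starRingEnd ℂ) a) • v, ?_, ?_⟩
        · rw [norm_eq', toE_smul, norm_smul, ← hs]
          have h1 : ‖((-(η/(s*A)) : ℝ) : ℂ) * (starRingEnd ℂ) a‖ = (η/(s*A)) * A := by
            rw [norm_mul, Complex.norm_real, Real.norm_eq_abs, abs_neg,
              abs_of_nonneg (div_nonneg hη (le_of_lt (mul_pos hs0' hApos)))]
            simp [hA, Complex.norm_conj]
          rw [h1, div_mul_eq_mul_div, div_mul_eq_mul_div, div_le_iff₀ (mul_pos hs0' hApos)]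
          nlinarith
        · rw [hrw, toE_smul, inner_smul_left, hvv]
          have ha0 : a ≠ 0 := by
            intro h; rw [hA, h, norm_zero] at hApos; exact lt_irrefl 0 hApos
          have hcc : ((starRingEnd ℂ)) (((-(η/(s*A)) : ℝ) : ℂ) * (starRingEnd ℂ) a)
              = ((-(η/(s*A)) : ℝ) : ℂ) * a := by
            simp
          rw [hcc]
          have key : a + ((-(η/(s*A)) : ℝ) : ℂ) * a * ((s:ℂ))^2
              = (((1 - η*s/A : ℝ)) : ℂ) * a := by
            have hAne : (A:ℂ) ≠ 0 := by
              simp [Complex.ofReal_eq_zero]; exact ne_of_gt hApos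
            have hsne : (s:ℂ) ≠ 0 := by
              simp [Complex.ofReal_eq_zero]; exact ne_of_gt hs0'
            push_cast
            field_simp
            ring
          rw [key, norm_mul]
          have h1 : max 0 (A - η * s) = A - η * s := by
            rw [max_eq_right]; linarith
          rw [h1]
          have h2 : ‖(((1 - η*s/A : ℝ)) : ℂ)‖ = 1 - η*s/A := by
            rw [Complex.norm_real, Real.norm_eq_abs, abs_of_nonneg]
            rw [sub_nonneg, div_le_one hApos]; linarith
          rw [h2, ← hA]
          have h3 : (1 - η*s/A) * A = A - η * s := by field_simp
          rw [h3]
  · -- lower bound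
    rintro y ⟨e, he, hy⟩
    rw [hy, hrw, dot_eq_inner', norm_eq', ← ha, ← hA, ← hs]
    apply pow_le_pow_left₀ (le_max_left _ _)
    apply max_le (norm_nonneg _)
    have h1 : ‖(inner ℂ (toE e) (toE v) : ℂ)‖ ≤ η * s := by
      calc ‖(inner ℂ (toE e) (toE v) : ℂ)‖ ≤ ‖toE e‖ * ‖toE v‖ := norm_inner_le_norm _ _
        _ ≤ η * s := by
            apply mul_le_mul_of_nonneg_right _ (norm_nonneg _)
            rwa [norm_eq'] at he
    have h2 : A ≤ ‖a + inner ℂ (toE e) (toE v)‖ + ‖(inner ℂ (toE e) (toE v) : ℂ)‖ := by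
      calc A = ‖(a + inner ℂ (toE e) (toE v)) - inner ℂ (toE e) (toE v)‖ := by rw [hA]; ring_nf
        _ ≤ _ := norm_sub_le _ _
    linarith
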